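/- Let d ≥ 2 and define C = (4 d Γ((d+2)/2) / (√π Γ((d-1)/2))) ∫₀¹ t² log(t) (1-t²)^{(d-3)/2} dt, and let f : ℝ_{≥0} → ℝ be f(x) = d x² log(x) - C x² for x > 0 and f(0) = 0. Then for all x, y ∈ ℝ^d with x ≠ y, ∫_{S^{d-1}} f(|⟨ξ, x - y⟩|) dU(ξ) = ‖x - y‖² log(‖x - y‖), where U is the uniform (normalized rotation-invariant) probability measure on the unit sphere S^{d-1} ⊆ ℝ^d. That is, the thin plate spline kernel K(x,y) = ‖x-y‖² log(‖x-y‖) is the sliced version of the one-dimensional kernel k(s,t) = f(|s-t|). -/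

import Mathlib

open MeasureTheory Metric Set
open scoped RealInnerProductSpace ENNReal NNReal

noncomputable section

namespace TPS


lemma integrable_sq_exp : Integrable (fun x : ℝ ↦ x ^ 2 * Real.exp (-x ^ 2)) := by
  have h := integrable_rpow_mul_exp_neg_mul_sq (b := 1) one_pos (s := 2) (by norm_num)
  refine h.congr (Filter.Eventually.of_forall fun x ↦ ?_)
  have e : x ^ (2:ℝ) = x ^ (2:ℕ) := by
    rw [← Real.rpow_natCast x 2]; norm_num
  simp only [e]
  ring_nf

lemma integrable_exp_sq : Integrable (fun x : ℝ ↦ Real.exp (-x ^ 2)) := by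
  have h := integrable_exp_neg_mul_sq (b := 1) one_pos
  refine h.congr (Filter.Eventually.of_forall fun x ↦ ?_)
  ring_nf

/-- the one-dimensional Gaussian integral -/
def G0 : ℝ := ∫ x : ℝ, Real.exp (-x ^ 2)

/-- the one-dimensional Gaussian second moment -/
def G2 : ℝ := ∫ x : ℝ, x ^ 2 * Real.exp (-x ^ 2)

lemma G0_pos : 0 < G0 := by
  have : G0 = Real.sqrt (Real.pi / 1) := by
    rw [G0, ← integral_gaussian 1]
    congr 1 with x
    ring_nf
  rw [this]
  positivity

lemma G2_pos : 0 < G2 := by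
  have h1 : G2 = 2 * ∫ x in Ioi (0:ℝ), x ^ 2 * Real.exp (-x ^ 2) := by
    rw [G2, ← integral_comp_abs (f := fun x ↦ x ^ 2 * Real.exp (-x ^ 2))]
    congr 1 with x
    rw [sq_abs]
  have h2 : ∫ x in Ioi (0:ℝ), x ^ 2 * Real.exp (-x ^ 2)
      = 1 / 2 * Real.Gamma ((2 + 1) / 2) := by
    rw [← integral_rpow_mul_exp_neg_rpow (p := 2) (q := 2) two_pos (by norm_num)]
    refine setIntegral_congr_fun measurableSet_Ioi fun x hx ↦ ?_
    have e : x ^ (2:ℝ) = x ^ (2:ℕ) := by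
      rw [← Real.rpow_natCast x 2]; norm_num
    simp only [e]
  rw [h1, h2]
  have := Real.Gamma_pos_of_pos (show (0:ℝ) < (2+1)/2 by norm_num)
  positivity





lemma eucl_norm_sq (d : ℕ) (x : EuclideanSpace ℝ (Fin d)) : ‖x‖ ^ 2 = ∑ i, (x i) ^ 2 := by
  rw [EuclideanSpace.norm_eq, Real.sq_sqrt (by positivity)]
  exact Finset.sum_congr rfl fun i _ ↦ by rw [Real.norm_eq_abs, sq_abs]

lemma integral_eucl_eq_pi (d : ℕ) (g : (Fin d → ℝ) → ℝ) :
    ∫ x : EuclideanSpace ℝ (Fin d), g (fun i ↦ x i) = ∫ y : Fin d → ℝ, g y := by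
  have := (EuclideanSpace.volume_preserving_symm_measurableEquiv_toLp (Fin d)).integral_comp
    (MeasurableEquiv.measurableEmbedding _) g
  rw [← this]
  rfl

lemma integrable_eucl_iff_pi (d : ℕ) (g : (Fin d → ℝ) → ℝ) :
    Integrable (fun x : EuclideanSpace ℝ (Fin d) ↦ g (fun i ↦ x i)) ↔
      Integrable g (volume : Measure (Fin d → ℝ)) := by
  have := (EuclideanSpace.volume_preserving_symm_measurableEquiv_toLp (Fin d)).integrable_comp_emb
    (MeasurableEquiv.measurableEmbedding _) (g := g)
  rw [← this]
  rfl

lemma eucl_exp_eq (d : ℕ) :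
    ∫ x : EuclideanSpace ℝ (Fin d), Real.exp (-‖x‖ ^ 2) = G0 ^ d := by
  have key : ∀ x : EuclideanSpace ℝ (Fin d),
      Real.exp (-‖x‖ ^ 2) = (fun y : Fin d → ℝ ↦ ∏ i, Real.exp (-(y i) ^ 2)) (fun i ↦ x i) := by
    intro x
    simp only [eucl_norm_sq d x, ← Finset.sum_neg_distrib, Real.exp_sum]
  calc ∫ x : EuclideanSpace ℝ (Fin d), Real.exp (-‖x‖ ^ 2)
      = ∫ x : EuclideanSpace ℝ (Fin d),
          (fun y : Fin d → ℝ ↦ ∏ i, Real.exp (-(y i) ^ 2)) (fun i ↦ x i) := by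
        exact integral_congr_ae (Filter.Eventually.of_forall key)
    _ = ∫ y : Fin d → ℝ, ∏ i, Real.exp (-(y i) ^ 2) :=
        integral_eucl_eq_pi d (fun y ↦ ∏ i, Real.exp (-(y i) ^ 2))
    _ = ∏ _i : Fin d, ∫ x : ℝ, Real.exp (-x ^ 2) :=
        integral_fintype_prod_eq_prod (ι := Fin d) (fun _ x ↦ Real.exp (-x ^ 2))
    _ = G0 ^ d := by rw [Finset.prod_const, G0, Finset.card_univ, Fintype.card_fin]

def fpi (d : ℕ) (i₀ i : Fin d) : ℝ → ℝ := fun x ↦ (if i = i₀ then x ^ 2 else 1) * Real.exp (-x ^ 2)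

lemma fpi_integrable (d : ℕ) (i₀ i : Fin d) : Integrable (fpi d i₀ i) := by
  unfold fpi
  by_cases h : i = i₀
  · simp only [if_pos h]
    exact integrable_sq_exp
  · simp only [if_neg h, one_mul]
    exact integrable_exp_sq

lemma fpi_integral (d : ℕ) (i₀ i : Fin d) : ∫ x : ℝ, fpi d i₀ i x = if i = i₀ then G2 else G0 := by
  unfold fpi
  by_cases h : i = i₀
  · simp only [if_pos h]
    rfl
  · simp only [if_neg h, one_mul]
    rfl

lemma key_prod (d : ℕ) (i₀ : Fin d) (y : Fin d → ℝ) :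
    (y i₀) ^ 2 * Real.exp (-∑ i, (y i) ^ 2) = ∏ i, fpi d i₀ i (y i) := by
  simp only [fpi]
  rw [Finset.prod_mul_distrib, Finset.prod_ite_eq' Finset.univ i₀ (fun i ↦ (y i) ^ 2),
    if_pos (Finset.mem_univ i₀), ← Real.exp_sum]
  simp [Finset.sum_neg_distrib]

lemma moment_integrable (d : ℕ) (i₀ : Fin d) :
    Integrable (fun x : EuclideanSpace ℝ (Fin d) ↦ (x i₀) ^ 2 * Real.exp (-‖x‖ ^ 2)) := by
  have h2 := (integrable_eucl_iff_pi d (fun y ↦ ∏ i, fpi d i₀ i (y i))).mpr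
    (Integrable.fintype_prod_dep fun i ↦ fpi_integrable d i₀ i)
  refine h2.congr (Filter.Eventually.of_forall fun x ↦ ?_)
  show (∏ i, fpi d i₀ i (x i)) = (x i₀) ^ 2 * Real.exp (-‖x‖ ^ 2)
  rw [eucl_norm_sq d x, key_prod]

lemma moment_integral (d : ℕ) (i₀ : Fin d) :
    ∫ x : EuclideanSpace ℝ (Fin d), (x i₀) ^ 2 * Real.exp (-‖x‖ ^ 2)
      = G2 * G0 ^ (d - 1) := by
  have h1 : ∫ x : EuclideanSpace ℝ (Fin d), (x i₀) ^ 2 * Real.exp (-‖x‖ ^ 2)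
      = ∫ y : Fin d → ℝ, ∏ i, fpi d i₀ i (y i) := by
    rw [← integral_eucl_eq_pi d]
    refine integral_congr_ae (Filter.Eventually.of_forall fun x ↦ ?_)
    show (x i₀) ^ 2 * Real.exp (-‖x‖ ^ 2) = ∏ i, fpi d i₀ i (x i)
    rw [eucl_norm_sq d x, key_prod]
  rw [h1, volume_pi, integral_fintype_prod_eq_prod (ι := Fin d) (fpi d i₀)]
  simp_rw [fpi_integral]
  rw [← Finset.mul_prod_erase Finset.univ _ (Finset.mem_univ i₀), if_pos rfl]
  congr 1
  rw [Finset.prod_congr rfl (fun i hi ↦ if_neg (Finset.ne_of_mem_erase hi)),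
    Finset.prod_const, Finset.card_erase_of_mem (Finset.mem_univ i₀), Finset.card_univ,
    Fintype.card_fin]

lemma norm_moment_integral (d : ℕ) :
    ∫ x : EuclideanSpace ℝ (Fin d), ‖x‖ ^ 2 * Real.exp (-‖x‖ ^ 2)
      = d * (G2 * G0 ^ (d - 1)) := by
  have h1 : ∀ x : EuclideanSpace ℝ (Fin d), ‖x‖ ^ 2 * Real.exp (-‖x‖ ^ 2)
      = ∑ i, (x i) ^ 2 * Real.exp (-‖x‖ ^ 2) := by
    intro x
    rw [eucl_norm_sq d x, Finset.sum_mul]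
  calc ∫ x : EuclideanSpace ℝ (Fin d), ‖x‖ ^ 2 * Real.exp (-‖x‖ ^ 2)
      = ∫ x : EuclideanSpace ℝ (Fin d), ∑ i, (x i) ^ 2 * Real.exp (-‖x‖ ^ 2) :=
        integral_congr_ae (Filter.Eventually.of_forall h1)
    _ = ∑ _i : Fin d, (G2 * G0 ^ (d - 1)) := by
        rw [integral_finset_sum Finset.univ fun i _ ↦ moment_integrable d i]
        exact Finset.sum_congr rfl fun i _ ↦ moment_integral d i
    _ = d * (G2 * G0 ^ (d - 1)) := by
        rw [Finset.sum_const, Finset.card_univ, Fintype.card_fin, nsmul_eq_mul]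



lemma transfer_to_coord (d : ℕ) (i0 : Fin d) (u : EuclideanSpace ℝ (Fin d)) (hu : ‖u‖ = 1)
    (φ : ℝ → ℝ → ℝ) :
    ∫ x : EuclideanSpace ℝ (Fin d), φ ⟪x, u⟫ ‖x‖
      = ∫ x : EuclideanSpace ℝ (Fin d), φ (x i0) ‖x‖ := by
  set e₀ : EuclideanSpace ℝ (Fin d) := EuclideanSpace.single i0 (1:ℝ) with he₀
  have he₀n : ‖e₀‖ = 1 := by
    rw [he₀, EuclideanSpace.norm_single, norm_one]
  set T : EuclideanSpace ℝ (Fin d) ≃ₗᵢ[ℝ] EuclideanSpace ℝ (Fin d) :=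
    Submodule.reflection (Submodule.span ℝ {e₀ - u})ᗮ with hT
  have hTe : T e₀ = u := Submodule.reflection_sub (by rw [he₀n, hu])
  have h1 : ∫ x : EuclideanSpace ℝ (Fin d), φ ⟪x, u⟫ ‖x‖
      = ∫ x : EuclideanSpace ℝ (Fin d), φ ⟪T x, u⟫ ‖T x‖ := by
    exact (T.measurePreserving.integral_comp
      T.toHomeomorph.measurableEmbedding (fun y ↦ φ ⟪y, u⟫ ‖y‖)).symm
  rw [h1]
  refine integral_congr_ae (Filter.Eventually.of_forall fun x ↦ ?_)
  rw [← hTe]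
  show φ ⟪T x, T e₀⟫ ‖T x‖ = φ (x i0) ‖x‖
  rw [T.inner_map_map, T.norm_map]
  congr 1
  rw [he₀]
  simp [EuclideanSpace.inner_single_right]



lemma integral_volumeIoiPow (n : ℕ) (h : ℝ → ℝ) :
    ∫ r : Ioi (0:ℝ), h r.1 ∂(Measure.volumeIoiPow n) = ∫ r in Ioi (0:ℝ), r ^ n * h r := by
  simp only [Measure.volumeIoiPow, ENNReal.ofReal]
  rw [integral_withDensity_eq_integral_smul
      ((measurable_subtype_coe.pow_const _).real_toNNReal),
    integral_subtype_comap measurableSet_Ioi fun a : ℝ ↦ Real.toNNReal (a ^ n) • h a,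
    setIntegral_congr_fun measurableSet_Ioi fun x hx ↦ ?_]
  rw [NNReal.smul_def, Real.coe_toNNReal _ (pow_nonneg hx.out.le _), smul_eq_mul]

/-- Polar factorization on a Euclidean space. -/
lemma polar_factor (d : ℕ) [NeZero d] (u : EuclideanSpace ℝ (Fin d)) (g h : ℝ → ℝ) :
    ∫ x : EuclideanSpace ℝ (Fin d), g (‖x‖⁻¹ * ⟪x, u⟫) * h ‖x‖ =
      (∫ ξ : sphere (0 : EuclideanSpace ℝ (Fin d)) 1,
          g ⟪(ξ : EuclideanSpace ℝ (Fin d)), u⟫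
          ∂(volume : Measure (EuclideanSpace ℝ (Fin d))).toSphere) *
        ∫ r in Ioi (0:ℝ), r ^ (d - 1) * h r := by
  have hnt : Nontrivial (EuclideanSpace ℝ (Fin d)) := by
    have : 0 < d := Nat.pos_of_ne_zero (NeZero.ne d)
    infer_instance
  set μ : Measure (EuclideanSpace ℝ (Fin d)) := volume
  have hdim : Module.finrank ℝ (EuclideanSpace ℝ (Fin d)) = d := finrank_euclideanSpace_fin
  calc
    ∫ x : EuclideanSpace ℝ (Fin d), g (‖x‖⁻¹ * ⟪x, u⟫) * h ‖x‖
        = ∫ x : ({(0 : EuclideanSpace ℝ (Fin d))}ᶜ : Set (EuclideanSpace ℝ (Fin d))),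
            g (‖x.1‖⁻¹ * ⟪x.1, u⟫) * h ‖x.1‖ ∂(μ.comap (↑)) := by
      rw [integral_subtype_comap (measurableSet_singleton _).compl
        fun x ↦ g (‖x‖⁻¹ * ⟪x, u⟫) * h ‖x‖, MeasureTheory.restrict_compl_singleton]
    _ = ∫ p : sphere (0 : EuclideanSpace ℝ (Fin d)) 1 × Ioi (0:ℝ),
          g ⟪(p.1 : EuclideanSpace ℝ (Fin d)), u⟫ * h p.2.1
          ∂(μ.toSphere.prod (Measure.volumeIoiPow (Module.finrank ℝ (EuclideanSpace ℝ (Fin d)) - 1))) := by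
      rw [← (μ.measurePreserving_homeomorphUnitSphereProd).integral_comp
        (Homeomorph.measurableEmbedding _)
        (fun p ↦ g ⟪(p.1 : EuclideanSpace ℝ (Fin d)), u⟫ * h p.2.1)]
      refine integral_congr_ae (Filter.Eventually.of_forall fun x ↦ ?_)
      simp only [homeomorphUnitSphereProd_apply_fst_coe, homeomorphUnitSphereProd_apply_snd_coe]
      rw [real_inner_smul_left]
    _ = (∫ ξ : sphere (0 : EuclideanSpace ℝ (Fin d)) 1,
            g ⟪(ξ : EuclideanSpace ℝ (Fin d)), u⟫ ∂μ.toSphere) *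
        ∫ r : Ioi (0:ℝ), h r.1 ∂(Measure.volumeIoiPow (Module.finrank ℝ (EuclideanSpace ℝ (Fin d)) - 1)) :=
      integral_prod_mul (f := fun ξ : sphere (0 : EuclideanSpace ℝ (Fin d)) 1 ↦ g ⟪(ξ : EuclideanSpace ℝ (Fin d)), u⟫) (g := fun r : Ioi (0:ℝ) ↦ h r.1)
    _ = _ := by rw [integral_volumeIoiPow, hdim]



lemma integrable_pow_exp_Ioi (m : ℕ) :
    IntegrableOn (fun r : ℝ ↦ r ^ m * Real.exp (-r ^ 2)) (Ioi 0) := by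
  have h := integrableOn_rpow_mul_exp_neg_mul_sq (b := 1) one_pos (s := (m:ℝ))
    (by exact_mod_cast neg_one_lt_zero.trans_le (Nat.cast_nonneg m))
  refine h.congr_fun (fun x hx ↦ ?_) measurableSet_Ioi
  beta_reduce
  rw [Real.rpow_natCast]
  ring_nf

/-- the 2D polar-coordinates evaluation. -/
lemma polar2D (m : ℕ) (g : ℝ → ℝ) (hgm : Measurable g) (hgb : ∀ t, |t| ≤ 1 → |g t| ≤ 1) :
    ∫ a : ℝ, ∫ s in Ioi (0:ℝ),
        s ^ m * (g ((Real.sqrt (a ^ 2 + s ^ 2))⁻¹ * a) * Real.exp (-Real.sqrt (a ^ 2 + s ^ 2) ^ 2))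
      = (∫ r in Ioi (0:ℝ), r ^ (m + 1) * Real.exp (-r ^ 2)) *
          ∫ θ in Ioo 0 Real.pi, Real.sin θ ^ m * g (Real.cos θ) := by
  set F₂ : ℝ × ℝ → ℝ := fun z ↦
    z.2 ^ m * (g ((Real.sqrt (z.1 ^ 2 + z.2 ^ 2))⁻¹ * z.1) *
      Real.exp (-Real.sqrt (z.1 ^ 2 + z.2 ^ 2) ^ 2)) with hF₂
  have hF₂m : Measurable F₂ := by
    apply Measurable.mul
    · exact (measurable_snd.pow_const m)
    · apply Measurable.mul
      · apply hgm.comp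
        exact ((Real.continuous_sqrt.measurable.comp
          ((measurable_fst.pow_const 2).add (measurable_snd.pow_const 2))).inv.mul measurable_fst)
      · exact (Real.continuous_exp.measurable.comp
          ((Real.continuous_sqrt.measurable.comp
            ((measurable_fst.pow_const 2).add (measurable_snd.pow_const 2))).pow_const 2).neg)
  have hmeq : (volume : Measure ℝ).prod (volume.restrict (Ioi (0:ℝ)))
      = (volume : Measure (ℝ × ℝ)).restrict (univ ×ˢ Ioi (0:ℝ)) := by
    rw [Measure.volume_eq_prod, ← Measure.prod_restrict, Measure.restrict_univ]
  have hbound : Integrable (fun z : ℝ × ℝ ↦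
      Real.exp (-z.1 ^ 2) * (z.2 ^ m * Real.exp (-z.2 ^ 2)))
      ((volume : Measure ℝ).prod (volume.restrict (Ioi (0:ℝ)))) :=
    Integrable.mul_prod integrable_exp_sq (integrable_pow_exp_Ioi m)
  have habs : ∀ z : ℝ × ℝ, z.2 ∈ Ioi (0:ℝ) →
      ‖F₂ z‖ ≤ Real.exp (-z.1 ^ 2) * (z.2 ^ m * Real.exp (-z.2 ^ 2)) := by
    rintro ⟨a, s⟩ hs
    simp only [mem_Ioi] at hs
    have hsq : Real.sqrt (a ^ 2 + s ^ 2) ^ 2 = a ^ 2 + s ^ 2 :=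
      Real.sq_sqrt (by positivity)
    have hroot : |a| ≤ Real.sqrt (a ^ 2 + s ^ 2) := by
      rw [← Real.sqrt_sq_eq_abs]
      exact Real.sqrt_le_sqrt (by nlinarith)
    have harg : |(Real.sqrt (a ^ 2 + s ^ 2))⁻¹ * a| ≤ 1 := by
      rcases eq_or_lt_of_le (Real.sqrt_nonneg (a ^ 2 + s ^ 2)) with h0 | h0
      · rw [← h0]; simp
      · rw [abs_mul, abs_inv, abs_of_pos h0]
        rw [inv_mul_le_iff₀ h0]
        simpa using hroot
    have hg1 : |g ((Real.sqrt (a ^ 2 + s ^ 2))⁻¹ * a)| ≤ 1 := hgb _ harg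
    have : ‖F₂ (a, s)‖ = s ^ m * (|g ((Real.sqrt (a ^ 2 + s ^ 2))⁻¹ * a)| *
        Real.exp (-(a ^ 2 + s ^ 2))) := by
      rw [hF₂]
      simp only [Real.norm_eq_abs, abs_mul, hsq]
      rw [abs_of_pos (pow_pos hs m), abs_of_pos (Real.exp_pos _)]
    rw [this]
    calc s ^ m * (|g ((Real.sqrt (a ^ 2 + s ^ 2))⁻¹ * a)| * Real.exp (-(a ^ 2 + s ^ 2)))
        ≤ s ^ m * (1 * Real.exp (-(a ^ 2 + s ^ 2))) := by
          apply mul_le_mul_of_nonneg_left _ (by positivity)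
          exact mul_le_mul_of_nonneg_right hg1 (Real.exp_pos _).le
      _ = Real.exp (-a ^ 2) * (s ^ m * Real.exp (-s ^ 2)) := by
          rw [one_mul, neg_add, Real.exp_add]; ring
  have hInt : Integrable F₂ ((volume : Measure ℝ).prod (volume.restrict (Ioi (0:ℝ)))) := by
    refine hbound.mono' (hF₂m.aestronglyMeasurable) ?_
    rw [hmeq]
    filter_upwards [ae_restrict_mem (MeasurableSet.univ.prod measurableSet_Ioi)] with z hz
    exact habs z hz.2
  -- iterated to product
  rw [show (∫ a : ℝ, ∫ s in Ioi (0:ℝ),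
      s ^ m * (g ((Real.sqrt (a ^ 2 + s ^ 2))⁻¹ * a) * Real.exp (-Real.sqrt (a ^ 2 + s ^ 2) ^ 2)))
      = ∫ z : ℝ × ℝ, F₂ z ∂((volume : Measure ℝ).prod (volume.restrict (Ioi (0:ℝ)))) from
    (integral_integral hInt)]
  rw [hmeq, ← integral_indicator (MeasurableSet.univ.prod measurableSet_Ioi),
    ← integral_comp_polarCoord_symm]
  -- now over polar target
  have hAsub : (Ioi (0:ℝ) ×ˢ Ioo 0 Real.pi) ⊆ polarCoord.target := by
    rw [polarCoord_target]
    rintro ⟨r, θ⟩ ⟨hr, hθ⟩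
    exact ⟨hr, ⟨lt_trans (neg_neg_iff_pos.mpr Real.pi_pos) hθ.1, hθ.2⟩⟩
  have step : ∫ p in polarCoord.target,
      p.1 • (univ ×ˢ Ioi (0:ℝ)).indicator F₂ (polarCoord.symm p)
      = ∫ p in Ioi (0:ℝ) ×ˢ Ioo 0 Real.pi, p.1 • F₂ (polarCoord.symm p) := by
    rw [setIntegral_congr_fun (polarCoord.open_target.measurableSet) (g :=
      (Ioi (0:ℝ) ×ˢ Ioo 0 Real.pi).indicator (fun p ↦ p.1 • F₂ (polarCoord.symm p))) ?_,
      setIntegral_indicator (measurableSet_Ioi.prod measurableSet_Ioo),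
      inter_eq_self_of_subset_right hAsub]
    rintro ⟨r, θ⟩ hp
    rw [polarCoord_target] at hp
    obtain ⟨hr, hθ⟩ := hp
    simp only [mem_Ioi] at hr
    beta_reduce
    by_cases hθ' : θ ∈ Ioo (0:ℝ) Real.pi
    · have hmem : polarCoord.symm (r, θ) ∈ univ ×ˢ Ioi (0:ℝ) := by
        rw [polarCoord_symm_apply]
        refine ⟨trivial, ?_⟩
        exact mul_pos hr (Real.sin_pos_of_pos_of_lt_pi hθ'.1 hθ'.2)
      have hmemA : ((r, θ) : ℝ × ℝ) ∈ Ioi (0:ℝ) ×ˢ Ioo 0 Real.pi := ⟨hr, hθ'⟩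
      rw [indicator_of_mem hmem, indicator_of_mem hmemA]
    · have hmem : polarCoord.symm (r, θ) ∉ univ ×ˢ Ioi (0:ℝ) := by
        rw [polarCoord_symm_apply]
        rintro ⟨-, h2⟩
        simp only [mem_Ioi] at h2
        have hsin : Real.sin θ ≤ 0 := by
          rcases not_and_or.mp (fun hc ↦ hθ' ⟨hc.1, hc.2⟩) with h | h
          · push_neg at h
            exact Real.sin_nonpos_of_nonpos_of_neg_pi_le h hθ.1.le
          · push_neg at h
            have h1 : Real.sin θ = Real.sin (θ - 2 * Real.pi) := by
              rw [show θ - 2 * Real.pi = θ + 2 * Real.pi * (-1) by ring]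
              rw [show Real.sin θ = Real.sin (θ + 2 * Real.pi * (-1) + 2 * Real.pi * 1) by
                norm_num]
              rw [show θ + 2 * Real.pi * (-1) + 2 * Real.pi * 1 = θ + 2 * Real.pi * (-1) + 2 * Real.pi by ring, Real.sin_add_two_pi]
            rw [h1]
            apply Real.sin_nonpos_of_nonpos_of_neg_pi_le <;> nlinarith [Real.pi_pos, hθ.2]
        nlinarith [mul_pos hr h2, mul_nonpos_of_nonneg_of_nonpos hr.le hsin]
      have hmemA : ((r, θ) : ℝ × ℝ) ∉ Ioi (0:ℝ) ×ˢ Ioo 0 Real.pi := fun hc ↦ hθ' hc.2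
      rw [indicator_of_notMem hmem, indicator_of_notMem hmemA, smul_zero]
  rw [step]
  -- evaluate on the product region
  have step2 : ∫ p in Ioi (0:ℝ) ×ˢ Ioo 0 Real.pi, p.1 • F₂ (polarCoord.symm p)
      = ∫ p in Ioi (0:ℝ) ×ˢ Ioo 0 Real.pi,
          (p.1 ^ (m + 1) * Real.exp (-p.1 ^ 2)) * (Real.sin p.2 ^ m * g (Real.cos p.2)) := by
    refine setIntegral_congr_fun (measurableSet_Ioi.prod measurableSet_Ioo) ?_
    rintro ⟨r, θ⟩ ⟨hr, hθ⟩
    simp only [mem_Ioi] at hr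
    have hs : 0 < Real.sin θ := Real.sin_pos_of_pos_of_lt_pi hθ.1 hθ.2
    beta_reduce
    rw [polarCoord_symm_apply]
    have hsum : (r * Real.cos θ) ^ 2 + (r * Real.sin θ) ^ 2 = r ^ 2 := by
      have := Real.sin_sq_add_cos_sq θ
      nlinarith
    have hsqrt : Real.sqrt ((r * Real.cos θ) ^ 2 + (r * Real.sin θ) ^ 2) = r := by
      rw [hsum, Real.sqrt_sq hr.le]
    simp only [hF₂, hsqrt, smul_eq_mul]
    rw [show r⁻¹ * (r * Real.cos θ) = Real.cos θ by field_simp, mul_pow]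
    ring
  rw [step2]
  -- split the product integral
  rw [show ((volume : Measure (ℝ × ℝ)).restrict (Ioi (0:ℝ) ×ˢ Ioo 0 Real.pi))
      = ((volume : Measure ℝ).restrict (Ioi (0:ℝ))).prod
          ((volume : Measure ℝ).restrict (Ioo 0 Real.pi)) by
    rw [Measure.prod_restrict, ← Measure.volume_eq_prod]]
  exact integral_prod_mul (f := fun r : ℝ ↦ r ^ (m + 1) * Real.exp (-r ^ 2))
    (g := fun θ : ℝ ↦ Real.sin θ ^ m * g (Real.cos θ))



lemma arg_abs_le (a S : ℝ) (hS : 0 ≤ S) : |(Real.sqrt (a ^ 2 + S))⁻¹ * a| ≤ 1 := by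
  have hroot : |a| ≤ Real.sqrt (a ^ 2 + S) := by
    rw [← Real.sqrt_sq_eq_abs]
    exact Real.sqrt_le_sqrt (by nlinarith)
  rcases eq_or_lt_of_le (Real.sqrt_nonneg (a ^ 2 + S)) with h0 | h0
  · rw [← h0]; simp
  · rw [abs_mul, abs_inv, abs_of_pos h0, inv_mul_le_iff₀ h0]
    simpa using hroot

lemma slice_fubini (m : ℕ) (g : ℝ → ℝ) (hgm : Measurable g) (hgb : ∀ t, |t| ≤ 1 → |g t| ≤ 1) :
    ∫ x : EuclideanSpace ℝ (Fin (m + 2)), g (‖x‖⁻¹ * x 0) * Real.exp (-‖x‖ ^ 2)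
      = ((m + 1 : ℝ) * (volume (ball (0 : EuclideanSpace ℝ (Fin (m + 1))) 1)).toReal) *
        ∫ a : ℝ, ∫ s in Ioi (0:ℝ),
          s ^ m * (g ((Real.sqrt (a ^ 2 + s ^ 2))⁻¹ * a) *
            Real.exp (-Real.sqrt (a ^ 2 + s ^ 2) ^ 2)) := by
  set φ : ℝ → ℝ → ℝ := fun a ρ ↦ g (ρ⁻¹ * a) * Real.exp (-ρ ^ 2) with hφ
  set Φ : (Fin (m + 2) → ℝ) → ℝ := fun y ↦ φ (y 0) (Real.sqrt (∑ i, (y i) ^ 2)) with hΦ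
  set Ψ : ℝ × (Fin (m + 1) → ℝ) → ℝ :=
    fun z ↦ φ z.1 (Real.sqrt (z.1 ^ 2 + ∑ j, (z.2 j) ^ 2)) with hΨ
  have hnorm : ∀ x : EuclideanSpace ℝ (Fin (m + 2)), ‖x‖ = Real.sqrt (∑ i, (x i) ^ 2) := by
    intro x
    rw [← eucl_norm_sq, Real.sqrt_sq (norm_nonneg x)]
  -- Step 1 : to pi
  have S1 : ∫ x : EuclideanSpace ℝ (Fin (m + 2)), g (‖x‖⁻¹ * x 0) * Real.exp (-‖x‖ ^ 2)
      = ∫ y : Fin (m + 2) → ℝ, Φ y := by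
    rw [← integral_eucl_eq_pi (m + 2) Φ]
    refine integral_congr_ae (Filter.Eventually.of_forall fun x ↦ ?_)
    show g (‖x‖⁻¹ * x 0) * Real.exp (-‖x‖ ^ 2) = φ (x 0) (Real.sqrt (∑ i, (x i) ^ 2))
    rw [hφ, ← hnorm]
  -- Step 2 : split first coordinate
  have hmp := (measurePreserving_piFinSuccAbove (fun _ : Fin (m + 2) ↦ (volume : Measure ℝ)) 0).symm
  have S2 : ∫ y : Fin (m + 2) → ℝ, Φ y = ∫ z : ℝ × (Fin (m + 1) → ℝ), Ψ z := by
    rw [show (volume : Measure (Fin (m + 2) → ℝ)) = Measure.pi fun _ ↦ volume from volume_pi]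
    rw [← hmp.integral_comp (MeasurableEquiv.measurableEmbedding _) Φ]
    have : ((volume : Measure ℝ).prod (Measure.pi fun _ : Fin (m + 1) ↦ (volume : Measure ℝ)))
        = (volume : Measure (ℝ × (Fin (m + 1) → ℝ))) := by
      rw [← volume_pi, ← Measure.volume_eq_prod]
    rw [this]
    refine integral_congr_ae (Filter.Eventually.of_forall fun z ↦ ?_)
    have hy : ((MeasurableEquiv.piFinSuccAbove (fun _ : Fin (m + 2) ↦ ℝ) 0).symm z)
        = Fin.insertNth 0 z.1 z.2 := by
      rw [MeasurableEquiv.piFinSuccAbove_symm_apply]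
      rfl
    show Φ ((MeasurableEquiv.piFinSuccAbove (fun _ : Fin (m + 2) ↦ ℝ) 0).symm z) = Ψ z
    rw [hy, hΦ, hΨ]
    have h0 : Fin.insertNth (α := fun _ : Fin (m + 2) ↦ ℝ) 0 z.1 z.2 0 = z.1 :=
      by simp
    have hsucc : ∀ j : Fin (m + 1),
        Fin.insertNth (α := fun _ : Fin (m + 2) ↦ ℝ) 0 z.1 z.2 j.succ = z.2 j := by
      intro j
      rw [show (j.succ) = (0 : Fin (m + 2)).succAbove j from
        (congrFun Fin.succAbove_zero j).symm, Fin.insertNth_apply_succAbove]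
    simp only [h0]
    congr 2
    rw [Fin.sum_univ_succ]
    simp only [h0, hsucc]
  -- Integrability of Ψ
  have hΨm : Measurable Ψ := by
    apply Measurable.mul
    · exact hgm.comp ((Real.continuous_sqrt.measurable.comp
        ((measurable_fst.pow_const 2).add
          ((Finset.univ.measurable_sum fun j _ ↦
            ((measurable_pi_apply j).comp measurable_snd).pow_const 2)))).inv.mul measurable_fst)
    · exact Real.continuous_exp.measurable.comp
        (((Real.continuous_sqrt.measurable.comp
          ((measurable_fst.pow_const 2).add
            ((Finset.univ.measurable_sum fun j _ ↦
              ((measurable_pi_apply j).comp measurable_snd).pow_const 2)))).pow_const 2).neg)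
  have hpiG : Integrable (fun w : Fin (m + 1) → ℝ ↦ Real.exp (-∑ j, (w j) ^ 2)) := by
    have : (fun w : Fin (m + 1) → ℝ ↦ Real.exp (-∑ j, (w j) ^ 2))
        = fun w ↦ ∏ j, Real.exp (-(w j) ^ 2) := by
      funext w
      rw [← Real.exp_sum]
      congr 1
      rw [Finset.sum_neg_distrib]
    rw [this]
    exact Integrable.fintype_prod_dep fun _ ↦ integrable_exp_sq
  have hΨint : Integrable Ψ ((volume : Measure ℝ).prod (volume : Measure (Fin (m + 1) → ℝ))) := by
    refine (Integrable.mul_prod integrable_exp_sq hpiG).mono'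
      (by rw [← Measure.volume_eq_prod]; exact hΨm.aestronglyMeasurable) ?_
    refine Filter.Eventually.of_forall fun z ↦ ?_
    have hS : 0 ≤ ∑ j, (z.2 j) ^ 2 := by positivity
    have hsq : Real.sqrt (z.1 ^ 2 + ∑ j, (z.2 j) ^ 2) ^ 2 = z.1 ^ 2 + ∑ j, (z.2 j) ^ 2 :=
      Real.sq_sqrt (by positivity)
    have hb := hgb _ (arg_abs_le z.1 _ hS)
    show ‖φ z.1 (Real.sqrt (z.1 ^ 2 + ∑ j, (z.2 j) ^ 2))‖ ≤ _
    rw [hφ]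
    simp only [Real.norm_eq_abs, abs_mul, hsq]
    rw [abs_of_pos (Real.exp_pos _), neg_add, Real.exp_add]
    calc |g ((Real.sqrt (z.1 ^ 2 + ∑ j, (z.2 j) ^ 2))⁻¹ * z.1)| *
          (Real.exp (-z.1 ^ 2) * Real.exp (-∑ j, (z.2 j) ^ 2))
        ≤ 1 * (Real.exp (-z.1 ^ 2) * Real.exp (-∑ j, (z.2 j) ^ 2)) := by
          exact mul_le_mul_of_nonneg_right hb (by positivity)
      _ = Real.exp (-z.1 ^ 2) * Real.exp (-∑ j, (z.2 j) ^ 2) := one_mul _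
  -- Step 3 : Fubini
  have S3 : ∫ z : ℝ × (Fin (m + 1) → ℝ), Ψ z
      = ∫ a : ℝ, ∫ w : Fin (m + 1) → ℝ, Ψ (a, w) := by
    rw [Measure.volume_eq_prod]
    exact (integral_prod Ψ hΨint)
  -- Step 4 : inner radial integral
  have S4 : ∀ a : ℝ, ∫ w : Fin (m + 1) → ℝ, Ψ (a, w)
      = ((m + 1 : ℝ) * (volume (ball (0 : EuclideanSpace ℝ (Fin (m + 1))) 1)).toReal) *
          ∫ s in Ioi (0:ℝ), s ^ m * (g ((Real.sqrt (a ^ 2 + s ^ 2))⁻¹ * a) *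
            Real.exp (-Real.sqrt (a ^ 2 + s ^ 2) ^ 2)) := by
    intro a
    have h1 : ∫ w : Fin (m + 1) → ℝ, Ψ (a, w)
        = ∫ x' : EuclideanSpace ℝ (Fin (m + 1)), φ a (Real.sqrt (a ^ 2 + ‖x'‖ ^ 2)) := by
      rw [← integral_eucl_eq_pi (m + 1) (fun w ↦ Ψ (a, w))]
      refine integral_congr_ae (Filter.Eventually.of_forall fun x' ↦ ?_)
      show Ψ (a, fun j ↦ x' j) = φ a (Real.sqrt (a ^ 2 + ‖x'‖ ^ 2))
      rw [hΨ]
      simp only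
      rw [eucl_norm_sq (m + 1) x']
    have h2 := integral_fun_norm_addHaar (volume : Measure (EuclideanSpace ℝ (Fin (m + 1))))
      (fun s ↦ φ a (Real.sqrt (a ^ 2 + s ^ 2)))
    rw [finrank_euclideanSpace_fin] at h2
    rw [h1, h2]
    rw [nsmul_eq_mul, smul_eq_mul]
    push_cast
    rw [← mul_assoc]
    congr 1
  rw [S1, S2, S3]
  rw [integral_congr_ae (Filter.Eventually.of_forall S4), integral_const_mul]



/-- the even function `t ↦ t² log |t|` -/
def g₂ : ℝ → ℝ := fun t ↦ t ^ 2 * Real.log |t|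

lemma g₂_measurable : Measurable g₂ :=
  (measurable_id.pow_const 2).mul (Real.measurable_log.comp measurable_abs)

lemma g₂_bound : ∀ t : ℝ, |t| ≤ 1 → |g₂ t| ≤ 1 := by
  intro t ht
  rcases eq_or_ne t 0 with rfl | h0
  · simp [g₂]
  · set s := |t| with hs
    have hs0 : 0 < s := abs_pos.mpr h0
    have hlog : Real.log s ≤ 0 := Real.log_nonpos hs0.le ht
    have h1 : |g₂ t| = s ^ 2 * (-Real.log s) := by
      rw [g₂, abs_mul, abs_pow, ← hs, abs_of_nonpos hlog]
    have h2 : -Real.log s ≤ s⁻¹ - 1 := by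
      have := Real.log_le_sub_one_of_pos (inv_pos.mpr hs0)
      rw [Real.log_inv] at this
      linarith
    rw [h1]
    have h3 : s ^ 2 * (-Real.log s) ≤ s ^ 2 * (s⁻¹ - 1) :=
      mul_le_mul_of_nonneg_left h2 (by positivity)
    have h4 : s ^ 2 * (s⁻¹ - 1) = s - s ^ 2 := by
      field_simp
    nlinarith [sq_nonneg s]

lemma g₂_even (t : ℝ) : g₂ (-t) = g₂ t := by
  simp [g₂]

/-- the weight function on `(0, π)` -/
def w (m : ℕ) : ℝ → ℝ := fun θ ↦ Real.sin θ ^ m * g₂ (Real.cos θ)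

lemma w_measurable (m : ℕ) : Measurable (w m) :=
  (Real.measurable_sin.pow_const m).mul (g₂_measurable.comp Real.measurable_cos)

lemma w_integrableOn (m : ℕ) {a b : ℝ} (hab : Ioo a b ⊆ Ioo 0 Real.pi) :
    IntegrableOn (w m) (Ioo a b) := by
  apply Measure.integrableOn_of_bounded (M := 1) (measure_Ioo_lt_top).ne
    (w_measurable m).aestronglyMeasurable
  filter_upwards [ae_restrict_mem measurableSet_Ioo] with θ hθ
  obtain ⟨h1, h2⟩ := hab hθ
  have hsin : 0 < Real.sin θ := Real.sin_pos_of_pos_of_lt_pi h1 h2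
  have hsin1 : Real.sin θ ≤ 1 := Real.sin_le_one θ
  have hcos := g₂_bound (Real.cos θ) (Real.abs_cos_le_one θ)
  rw [w, Real.norm_eq_abs, abs_mul, abs_of_pos (pow_pos hsin m)]
  calc Real.sin θ ^ m * |g₂ (Real.cos θ)| ≤ 1 * 1 := by
        apply mul_le_mul _ hcos (abs_nonneg _) zero_le_one
        exact pow_le_one₀ hsin.le hsin1
    _ = 1 := one_mul 1

lemma w_reflect (m : ℕ) :
    ∫ θ in Ioo (Real.pi / 2) Real.pi, w m θ = ∫ θ in Ioo 0 (Real.pi / 2), w m θ := by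
  have himg : (fun θ : ℝ ↦ Real.pi - θ) '' Ioo 0 (Real.pi / 2) = Ioo (Real.pi / 2) Real.pi := by
    rw [image_const_sub_Ioo]
    congr 1 <;> ring_nf
  have key := integral_image_eq_integral_abs_deriv_smul
    (f := fun θ : ℝ ↦ Real.pi - θ) (f' := fun _ ↦ (-1:ℝ))
    (s := Ioo 0 (Real.pi / 2)) measurableSet_Ioo
    (fun θ _ ↦ ((hasDerivAt_id θ).const_sub Real.pi).hasDerivWithinAt)
    (fun θ₁ _ θ₂ _ h ↦ by dsimp at h; linarith) (w m)
  rw [himg] at key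
  rw [key]
  refine setIntegral_congr_fun measurableSet_Ioo fun θ _ ↦ ?_
  rw [smul_eq_mul, w, w, Real.sin_pi_sub, Real.cos_pi_sub, g₂_even]
  norm_num

lemma w_split (m : ℕ) :
    ∫ θ in Ioo 0 Real.pi, w m θ = 2 * ∫ θ in Ioo 0 (Real.pi / 2), w m θ := by
  have hsplit : Ioo (0:ℝ) Real.pi = Ioo 0 (Real.pi / 2) ∪ Ico (Real.pi / 2) Real.pi :=
    (Ioo_union_Ico_eq_Ioo (by positivity) (by linarith [Real.pi_pos])).symm
  have hIco : IntegrableOn (w m) (Ico (Real.pi / 2) Real.pi) := by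
    rw [IntegrableOn, Measure.restrict_congr_set Ioo_ae_eq_Ico.symm]
    exact w_integrableOn m (fun x hx ↦ ⟨lt_trans Real.pi_div_two_pos hx.1, hx.2⟩)
  rw [hsplit, setIntegral_union (by
      rintro s hs1 hs2 x hx
      exact absurd ((hs1 hx).2) (not_lt.mpr (hs2 hx).1)) measurableSet_Ico
    (w_integrableOn m (by
      intro x hx
      exact ⟨hx.1, lt_of_lt_of_le hx.2 (by linarith [Real.pi_pos])⟩))
    hIco,
    integral_Ico_eq_integral_Ioo,
    w_reflect m]
  ring

lemma cos_image : Real.cos '' Ioo 0 (Real.pi / 2) = Ioo (0:ℝ) 1 := by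
  ext t
  constructor
  · rintro ⟨θ, hθ, rfl⟩
    constructor
    · exact Real.cos_pos_of_mem_Ioo ⟨by linarith [hθ.1, Real.pi_pos], hθ.2⟩
    · have := Real.strictAntiOn_cos (left_mem_Icc.mpr Real.pi_pos.le)
        ⟨hθ.1.le, by linarith [hθ.2, Real.pi_pos]⟩ hθ.1
      simpa using this
  · rintro ⟨h0, h1⟩
    refine ⟨Real.arccos t, ⟨Real.arccos_pos.mpr h1, Real.arccos_lt_pi_div_two.mpr h0⟩,
      Real.cos_arccos (by linarith) (by linarith)⟩

lemma w_halfintegral (m : ℕ) :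
    ∫ θ in Ioo 0 (Real.pi / 2), w m θ
      = ∫ t in Ioo (0:ℝ) 1, (t ^ 2 * Real.log t) * (1 - t ^ 2) ^ (((m:ℝ) - 1) / 2) := by
  rw [← cos_image, integral_image_eq_integral_abs_deriv_smul measurableSet_Ioo
    (fun θ _ ↦ (Real.hasDerivAt_cos θ).hasDerivWithinAt)
    (Real.injOn_cos.mono (show Ioo (0:ℝ) (Real.pi / 2) ⊆ Icc 0 Real.pi from
      fun θ hθ ↦ ⟨hθ.1.le, by linarith [hθ.2, Real.pi_pos]⟩))]
  refine setIntegral_congr_fun measurableSet_Ioo fun θ hθ ↦ ?_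
  have hsin : 0 < Real.sin θ :=
    Real.sin_pos_of_pos_of_lt_pi hθ.1 (by linarith [hθ.2, Real.pi_pos])
  have hcos : 0 < Real.cos θ :=
    Real.cos_pos_of_mem_Ioo ⟨by linarith [hθ.1, Real.pi_pos], hθ.2⟩
  rw [smul_eq_mul, abs_neg, abs_of_pos hsin]
  have h1 : (1 : ℝ) - Real.cos θ ^ 2 = Real.sin θ ^ 2 := by
    have := Real.sin_sq_add_cos_sq θ
    linarith
  have h2 : (Real.sin θ ^ 2 : ℝ) ^ (((m:ℝ) - 1) / 2) = Real.sin θ ^ ((m:ℝ) - 1) := by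
    rw [← Real.rpow_natCast (Real.sin θ) 2, ← Real.rpow_mul hsin.le]
    congr 1
    push_cast
    ring
  have h3 : Real.sin θ * Real.sin θ ^ ((m:ℝ) - 1) = Real.sin θ ^ m := by
    nth_rewrite 1 [← Real.rpow_one (Real.sin θ)]
    rw [← Real.rpow_add hsin, ← Real.rpow_natCast (Real.sin θ) m]
    congr 1
    push_cast
    ring
  rw [h1, h2, w, g₂, abs_of_pos hcos]
  rw [show Real.sin θ * (Real.cos θ ^ 2 * Real.log (Real.cos θ) * Real.sin θ ^ ((m:ℝ) - 1))
      = (Real.sin θ * Real.sin θ ^ ((m:ℝ) - 1)) * (Real.cos θ ^ 2 * Real.log (Real.cos θ))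
      by ring, h3]

lemma w_total (m : ℕ) :
    ∫ θ in Ioo 0 Real.pi, w m θ
      = 2 * ∫ t in Ioo (0:ℝ) 1, (t ^ 2 * Real.log t) * (1 - t ^ 2) ^ (((m:ℝ) - 1) / 2) := by
  rw [w_split, w_halfintegral]








-- abbreviations
def sigma' (m : ℕ) : Measure (sphere (0 : EuclideanSpace ℝ (Fin (m + 2))) 1) :=
  (volume : Measure (EuclideanSpace ℝ (Fin (m + 2)))).toSphere

def Mr (m : ℕ) : ℝ := (sigma' m Set.univ).toReal

def I₀ (m : ℕ) : ℝ := ∫ r in Ioi (0:ℝ), r ^ (m + 1) * Real.exp (-r ^ 2)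
def I₂ (m : ℕ) : ℝ := ∫ r in Ioi (0:ℝ), r ^ (m + 1) * (r ^ 2 * Real.exp (-r ^ 2))
def Wθ (m : ℕ) : ℝ := ∫ θ in Ioo 0 Real.pi, w m θ
def cball (m : ℕ) : ℝ :=
  (m + 1 : ℝ) * (volume (ball (0 : EuclideanSpace ℝ (Fin (m + 1))) 1)).toReal

lemma sphere_const (m : ℕ) : Mr m * I₀ m = G0 ^ (m + 2) := by
  have h := polar_factor (m + 2) (0 : EuclideanSpace ℝ (Fin (m + 2)))
    (fun _ ↦ (1:ℝ)) (fun r ↦ Real.exp (-r ^ 2))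
  have hL : ∫ x : EuclideanSpace ℝ (Fin (m + 2)), (1:ℝ) * Real.exp (-‖x‖ ^ 2)
      = G0 ^ (m + 2) := by
    rw [← eucl_exp_eq (m + 2)]
    exact integral_congr_ae (Filter.Eventually.of_forall fun x ↦ one_mul _)
  rw [hL, integral_const] at h
  rw [show m + 2 - 1 = m + 1 from rfl] at h
  rw [Mr, sigma', I₀, h, smul_eq_mul, mul_one]
  rfl

lemma sphere_g1 (m : ℕ) (u : EuclideanSpace ℝ (Fin (m + 2))) (hu : ‖u‖ = 1) :
    (∫ ξ : sphere (0 : EuclideanSpace ℝ (Fin (m + 2))) 1,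
        ⟪(ξ : EuclideanSpace ℝ (Fin (m + 2))), u⟫ ^ 2 ∂(sigma' m)) * I₂ m
      = G2 * G0 ^ (m + 1) := by
  have h := polar_factor (m + 2) u (fun t ↦ t ^ 2) (fun r ↦ r ^ 2 * Real.exp (-r ^ 2))
  have hpt : ∀ x : EuclideanSpace ℝ (Fin (m + 2)),
      (‖x‖⁻¹ * ⟪x, u⟫) ^ 2 * (‖x‖ ^ 2 * Real.exp (-‖x‖ ^ 2))
        = (fun a ρ ↦ a ^ 2 * Real.exp (-ρ ^ 2)) ⟪x, u⟫ ‖x‖ := by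
    intro x
    rcases eq_or_ne x 0 with rfl | hx
    · simp
    · have hn : ‖x‖ ≠ 0 := norm_ne_zero_iff.mpr hx
      field_simp
  rw [integral_congr_ae (Filter.Eventually.of_forall hpt)] at h
  rw [transfer_to_coord (m + 2) 0 u hu (fun a ρ ↦ a ^ 2 * Real.exp (-ρ ^ 2))] at h
  have hmom := moment_integral (m + 2) 0
  rw [show m + 2 - 1 = m + 1 from rfl] at hmom
  rw [show m + 2 - 1 = m + 1 from rfl] at h
  rw [sigma', I₂, ← hmom]
  exact h.symm

lemma sphere_norm (m : ℕ) :
    Mr m * I₂ m = (m + 2 : ℝ) * (G2 * G0 ^ (m + 1)) := by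
  have h := polar_factor (m + 2) (0 : EuclideanSpace ℝ (Fin (m + 2)))
    (fun _ ↦ (1:ℝ)) (fun r ↦ r ^ 2 * Real.exp (-r ^ 2))
  have hL : ∫ x : EuclideanSpace ℝ (Fin (m + 2)), (1:ℝ) * (‖x‖ ^ 2 * Real.exp (-‖x‖ ^ 2))
      = (m + 2 : ℝ) * (G2 * G0 ^ (m + 1)) := by
    rw [show ∫ x : EuclideanSpace ℝ (Fin (m + 2)), (1:ℝ) * (‖x‖ ^ 2 * Real.exp (-‖x‖ ^ 2))
        = ∫ x : EuclideanSpace ℝ (Fin (m + 2)), ‖x‖ ^ 2 * Real.exp (-‖x‖ ^ 2) from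
      integral_congr_ae (Filter.Eventually.of_forall fun x ↦ one_mul _)]
    rw [norm_moment_integral (m + 2)]
    norm_num
  rw [hL, integral_const] at h
  rw [show m + 2 - 1 = m + 1 from rfl] at h
  rw [Mr, sigma', I₂, h, smul_eq_mul, mul_one]
  rfl

lemma sphere_g2_eq (m : ℕ) (u : EuclideanSpace ℝ (Fin (m + 2))) (hu : ‖u‖ = 1) :
    (∫ ξ : sphere (0 : EuclideanSpace ℝ (Fin (m + 2))) 1,
        g₂ ⟪(ξ : EuclideanSpace ℝ (Fin (m + 2))), u⟫ ∂(sigma' m)) * I₀ m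
      = cball m * (I₀ m * Wθ m) := by
  have h := polar_factor (m + 2) u g₂ (fun r ↦ Real.exp (-r ^ 2))
  have ht := transfer_to_coord (m + 2) 0 u hu (fun a ρ ↦ g₂ (ρ⁻¹ * a) * Real.exp (-ρ ^ 2))
  rw [show (∫ x : EuclideanSpace ℝ (Fin (m + 2)), g₂ (‖x‖⁻¹ * ⟪x, u⟫) * Real.exp (-‖x‖ ^ 2))
      = ∫ x : EuclideanSpace ℝ (Fin (m + 2)),
          (fun a ρ ↦ g₂ (ρ⁻¹ * a) * Real.exp (-ρ ^ 2)) ⟪x, u⟫ ‖x‖ from rfl, ht] at h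
  have hs := slice_fubini m g₂ g₂_measurable g₂_bound
  have hp := polar2D m g₂ g₂_measurable g₂_bound
  rw [hs, hp] at h
  rw [show m + 2 - 1 = m + 1 from rfl] at h
  simp only [sigma', I₀, Wθ, cball, w]
  exact h.symm














lemma Mr_ne (m : ℕ) : Mr m ≠ 0 := by
  intro h0
  have h := sphere_const m
  rw [h0, zero_mul] at h
  exact (pow_pos G0_pos (m + 2)).ne h

lemma I₀_ne (m : ℕ) : I₀ m ≠ 0 := by
  intro h0
  have h := sphere_const m
  rw [h0, mul_zero] at h
  exact (pow_pos G0_pos (m + 2)).ne h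

lemma I₂_ne (m : ℕ) : I₂ m ≠ 0 := by
  intro h0
  have h := sphere_norm m
  rw [h0, mul_zero] at h
  have : (0:ℝ) < (m + 2 : ℝ) * (G2 * G0 ^ (m + 1)) := by
    have := G0_pos
    have := G2_pos
    positivity
  exact this.ne h

lemma ball_toReal (n : ℕ) (hn : n ≠ 0) :
    (volume (ball (0 : EuclideanSpace ℝ (Fin n)) 1)).toReal
      = Real.sqrt Real.pi ^ n / Real.Gamma ((n:ℝ) / 2 + 1) := by
  have : Nonempty (Fin n) := Fin.pos_iff_nonempty.mp (Nat.pos_of_ne_zero hn)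
  rw [EuclideanSpace.volume_ball]
  have hΓ : 0 < Real.Gamma ((Fintype.card (Fin n) : ℝ) / 2 + 1) :=
    Real.Gamma_pos_of_pos (by positivity)
  rw [ENNReal.toReal_mul, ENNReal.ofReal_one, one_pow, ENNReal.toReal_one, one_mul,
    ENNReal.toReal_ofReal (by positivity), Fintype.card_fin]

lemma Mr_val (m : ℕ) :
    Mr m = ((m:ℝ) + 2) * (Real.sqrt Real.pi ^ (m + 2) / Real.Gamma (((m:ℝ) + 2) / 2 + 1)) := by
  rw [Mr, sigma', Measure.toSphere_apply_univ, ENNReal.toReal_mul, ENNReal.toReal_natCast,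
    finrank_euclideanSpace_fin, ball_toReal (m + 2) (by omega)]
  push_cast
  ring_nf

lemma cball_val (m : ℕ) :
    cball m = ((m:ℝ) + 1) * (Real.sqrt Real.pi ^ (m + 1) / Real.Gamma (((m:ℝ) + 1) / 2 + 1)) := by
  rw [cball, ball_toReal (m + 1) (by omega)]
  push_cast
  ring_nf

lemma const_identity (m : ℕ) :
    2 * ((m:ℝ) + 2) ^ 2 * cball m
      = (4 * ((m:ℝ) + 2) * Real.Gamma ((((m:ℝ) + 2) + 2) / 2) /
          (Real.sqrt Real.pi * Real.Gamma ((((m:ℝ) + 2) - 1) / 2))) * Mr m := by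
  rw [cball_val, Mr_val]
  have hπ : (0:ℝ) < Real.sqrt Real.pi := Real.sqrt_pos.mpr Real.pi_pos
  set A := Real.Gamma ((((m:ℝ) + 2) - 1) / 2) with hA
  have hApos : 0 < A := Real.Gamma_pos_of_pos (by
    have : (0:ℝ) ≤ (m:ℝ) := Nat.cast_nonneg m
    linarith)
  have hBpos : 0 < Real.Gamma ((((m:ℝ) + 2) + 2) / 2) := Real.Gamma_pos_of_pos (by positivity)
  have hG1 : Real.Gamma (((m:ℝ) + 1) / 2 + 1) = ((((m:ℝ) + 2) - 1) / 2) * A := by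
    rw [show ((m:ℝ) + 1) / 2 + 1 = ((((m:ℝ) + 2) - 1) / 2) + 1 by ring,
      Real.Gamma_add_one (by
        have : (0:ℝ) ≤ (m:ℝ) := Nat.cast_nonneg m
        intro hc
        nlinarith)]
  have hG2 : Real.Gamma (((m:ℝ) + 2) / 2 + 1) = Real.Gamma ((((m:ℝ) + 2) + 2) / 2) := by
    congr 1
    ring
  rw [hG1, hG2]
  rw [show Real.sqrt Real.pi ^ (m + 2) = Real.sqrt Real.pi ^ (m + 1) * Real.sqrt Real.pi from
    pow_succ _ _]
  set q : ℝ := (m:ℝ) with hq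
  have hq0 : (0:ℝ) ≤ q := Nat.cast_nonneg m
  have hq1 : q + 1 ≠ 0 := by linarith
  set P : ℝ := Real.sqrt Real.pi ^ (m + 1) with hP
  set B : ℝ := Real.Gamma ((q + 2 + 2) / 2) with hB
  have hL : 2 * (q + 2) ^ 2 * ((q + 1) * (P / ((q + 2 - 1) / 2 * A)))
      = 4 * (q + 2) ^ 2 * P / A := by
    rw [show (q + 2 - 1) / 2 * A = ((q + 1) * A) / 2 by ring]
    field_simp
    ring
  have hR : 4 * (q + 2) * B / (Real.sqrt Real.pi * A) * ((q + 2) * (P * Real.sqrt Real.pi / B))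
      = 4 * (q + 2) ^ 2 * P / A := by
    field_simp
  rw [hL, hR]












instance sigma'_finite (m : ℕ) : IsFiniteMeasure (sigma' m) := by
  unfold sigma'
  infer_instance

end TPS

open TPS

/-- The uniform (normalized rotation-invariant) probability measure on the unit sphere
`S^{d-1} ⊆ ℝ^d`, obtained by normalizing the surface measure. -/
noncomputable def uniformSphere (d : ℕ) :
    Measure (sphere (0 : EuclideanSpace ℝ (Fin d)) 1) :=
  ((volume : Measure (EuclideanSpace ℝ (Fin d))).toSphere Set.univ)⁻¹ •
    (volume : Measure (EuclideanSpace ℝ (Fin d))).toSphere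

/-- The thin plate spline kernel `K(x,y) = ‖x-y‖² log ‖x-y‖` is the sliced version of the
one-dimensional kernel with basis function `f(z) = d z² log z - C z²` (with `f(0) = 0`,
which holds automatically since `Real.log 0 = 0`), where
`C = (4d Γ((d+2)/2)/(√π Γ((d-1)/2))) ∫₀¹ t² log t (1-t²)^{(d-3)/2} dt`. -/
theorem thin_plate_spline_kernel_sliced (d : ℕ) (hd : 2 ≤ d) (C : ℝ)
    (hC : C = 4 * (d : ℝ) * Real.Gamma (((d : ℝ) + 2) / 2) /
        (Real.sqrt Real.pi * Real.Gamma (((d : ℝ) - 1) / 2)) *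
      ∫ t in Set.Ioo (0 : ℝ) 1, t ^ 2 * Real.log t * (1 - t ^ 2) ^ (((d : ℝ) - 3) / 2))
    (f : ℝ → ℝ) (hf : ∀ z : ℝ, f z = (d : ℝ) * z ^ 2 * Real.log z - C * z ^ 2)
    (x y : EuclideanSpace ℝ (Fin d)) (hxy : x ≠ y) :
    (∫ ξ : sphere (0 : EuclideanSpace ℝ (Fin d)) 1,
        f |⟪(ξ : EuclideanSpace ℝ (Fin d)), x - y⟫| ∂(uniformSphere d))
      = ‖x - y‖ ^ 2 * Real.log ‖x - y‖ := by
  obtain ⟨m, rfl⟩ : ∃ m, d = m + 2 := ⟨d - 2, by omega⟩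
  have hv : x - y ≠ 0 := sub_ne_zero.mpr hxy
  set r : ℝ := ‖x - y‖ with hr'
  have hr : 0 < r := by rw [hr']; exact norm_pos_iff.mpr hv
  set u : EuclideanSpace ℝ (Fin (m + 2)) := r⁻¹ • (x - y) with hu'
  have hu : ‖u‖ = 1 := by
    rw [hu', norm_smul, norm_inv, Real.norm_eq_abs, abs_of_pos hr, ← hr']
    field_simp
  have hvu : x - y = r • u := by rw [hu', smul_inv_smul₀ hr.ne']
  set dr : ℝ := (m : ℝ) + 2 with hdr
  have hdr0 : dr ≠ 0 := by positivity
  have hcast : ((m + 2 : ℕ) : ℝ) = dr := by rw [hdr]; push_cast; ring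
  -- pointwise identity
  have hpt : ∀ ξ : sphere (0 : EuclideanSpace ℝ (Fin (m + 2))) 1,
      f |⟪(ξ : EuclideanSpace ℝ (Fin (m + 2))), x - y⟫|
        = r ^ 2 * ((dr * Real.log r - C) * ⟪(ξ : EuclideanSpace ℝ (Fin (m + 2))), u⟫ ^ 2
            + dr * g₂ ⟪(ξ : EuclideanSpace ℝ (Fin (m + 2))), u⟫) := by
    intro ξ
    rw [show ⟪(ξ : EuclideanSpace ℝ (Fin (m + 2))), x - y⟫
        = r * ⟪(ξ : EuclideanSpace ℝ (Fin (m + 2))), u⟫ by rw [hvu, real_inner_smul_right],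
      hf, hcast]
    set t := ⟪(ξ : EuclideanSpace ℝ (Fin (m + 2))), u⟫ with ht'
    rcases eq_or_ne t 0 with h0 | h0
    · rw [h0]
      simp [g₂]
    · have habs : |r * t| = r * |t| := by rw [abs_mul, abs_of_pos hr]
      rw [habs, Real.log_mul hr.ne' (abs_ne_zero.mpr h0), g₂,
        show (r * |t|) ^ 2 = r ^ 2 * t ^ 2 by rw [mul_pow, sq_abs]]
      ring
  -- measure bookkeeping
  have hfin : sigma' m Set.univ ≠ ⊤ := measure_ne_top _ _
  have hne : sigma' m Set.univ ≠ 0 := by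
    intro h0
    apply Mr_ne m
    rw [Mr, h0, ENNReal.toReal_zero]
  have hUdef : uniformSphere (m + 2) = ((sigma' m Set.univ)⁻¹) • sigma' m := rfl
  have hcU0 : (sigma' m Set.univ)⁻¹ ≠ 0 := ENNReal.inv_ne_zero.mpr hfin
  have hcUtop : (sigma' m Set.univ)⁻¹ ≠ ⊤ := ENNReal.inv_ne_top.mpr hne
  have htoReal : ((sigma' m Set.univ)⁻¹).toReal = (Mr m)⁻¹ := by
    rw [ENNReal.toReal_inv, Mr]
  -- integrability
  have hq_cont : Continuous fun ξ : sphere (0 : EuclideanSpace ℝ (Fin (m + 2))) 1 ↦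
      ⟪(ξ : EuclideanSpace ℝ (Fin (m + 2))), u⟫ :=
    Continuous.inner continuous_subtype_val continuous_const
  have habs1 : ∀ ξ : sphere (0 : EuclideanSpace ℝ (Fin (m + 2))) 1,
      |⟪(ξ : EuclideanSpace ℝ (Fin (m + 2))), u⟫| ≤ 1 := by
    intro ξ
    have h := abs_real_inner_le_norm (ξ : EuclideanSpace ℝ (Fin (m + 2))) u
    rw [mem_sphere_zero_iff_norm.mp ξ.2, hu, one_mul] at h
    exact h
  have hqi : Integrable (fun ξ : sphere (0 : EuclideanSpace ℝ (Fin (m + 2))) 1 ↦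
      ⟪(ξ : EuclideanSpace ℝ (Fin (m + 2))), u⟫ ^ 2) (sigma' m) := by
    refine Integrable.mono' (integrable_const (1:ℝ)) ((hq_cont.pow 2).aestronglyMeasurable) ?_
    refine Filter.Eventually.of_forall fun ξ ↦ ?_
    rw [Real.norm_eq_abs, abs_pow]
    exact pow_le_one₀ (abs_nonneg _) (habs1 ξ)
  have hgi : Integrable (fun ξ : sphere (0 : EuclideanSpace ℝ (Fin (m + 2))) 1 ↦
      g₂ ⟪(ξ : EuclideanSpace ℝ (Fin (m + 2))), u⟫) (sigma' m) := by
    refine Integrable.mono' (integrable_const (1:ℝ))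
      ((g₂_measurable.comp hq_cont.measurable).aestronglyMeasurable) ?_
    exact Filter.Eventually.of_forall fun ξ ↦ by
      rw [Real.norm_eq_abs]; exact g₂_bound _ (habs1 ξ)
  have hqiU : Integrable (fun ξ : sphere (0 : EuclideanSpace ℝ (Fin (m + 2))) 1 ↦
      ⟪(ξ : EuclideanSpace ℝ (Fin (m + 2))), u⟫ ^ 2) (uniformSphere (m + 2)) := by
    rw [hUdef]
    exact (integrable_smul_measure hcU0 hcUtop).mpr hqi
  have hgiU : Integrable (fun ξ : sphere (0 : EuclideanSpace ℝ (Fin (m + 2))) 1 ↦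
      g₂ ⟪(ξ : EuclideanSpace ℝ (Fin (m + 2))), u⟫) (uniformSphere (m + 2)) := by
    rw [hUdef]
    exact (integrable_smul_measure hcU0 hcUtop).mpr hgi
  -- values of the two uniform integrals
  have hA : ∫ ξ : sphere (0 : EuclideanSpace ℝ (Fin (m + 2))) 1,
      ⟪(ξ : EuclideanSpace ℝ (Fin (m + 2))), u⟫ ^ 2 ∂(uniformSphere (m + 2)) = 1 / dr := by
    rw [hUdef, integral_smul_measure, htoReal, smul_eq_mul]
    have h1 := sphere_g1 m u hu
    have h2 := sphere_norm m
    have key : dr * (∫ ξ : sphere (0 : EuclideanSpace ℝ (Fin (m + 2))) 1,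
        ⟪(ξ : EuclideanSpace ℝ (Fin (m + 2))), u⟫ ^ 2 ∂(sigma' m)) = Mr m := by
      have h3 : (dr * ∫ ξ : sphere (0 : EuclideanSpace ℝ (Fin (m + 2))) 1,
          ⟪(ξ : EuclideanSpace ℝ (Fin (m + 2))), u⟫ ^ 2 ∂(sigma' m)) * I₂ m
          = Mr m * I₂ m := by
        rw [mul_assoc, h1, h2, hdr]
      exact mul_right_cancel₀ (I₂_ne m) h3
    rw [show (∫ ξ : sphere (0 : EuclideanSpace ℝ (Fin (m + 2))) 1,
        ⟪(ξ : EuclideanSpace ℝ (Fin (m + 2))), u⟫ ^ 2 ∂(sigma' m)) = Mr m / dr by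
      rw [← key]; field_simp]
    field_simp [Mr_ne m]
  have hB : ∫ ξ : sphere (0 : EuclideanSpace ℝ (Fin (m + 2))) 1,
      g₂ ⟪(ξ : EuclideanSpace ℝ (Fin (m + 2))), u⟫ ∂(uniformSphere (m + 2))
      = (Mr m)⁻¹ * (cball m * Wθ m) := by
    rw [hUdef, integral_smul_measure, htoReal, smul_eq_mul]
    congr 1
    have h1 := sphere_g2_eq m u hu
    have h3 : (∫ ξ : sphere (0 : EuclideanSpace ℝ (Fin (m + 2))) 1,
        g₂ ⟪(ξ : EuclideanSpace ℝ (Fin (m + 2))), u⟫ ∂(sigma' m)) * I₀ m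
        = (cball m * Wθ m) * I₀ m := by
      rw [h1]; ring
    exact mul_right_cancel₀ (I₀_ne m) h3
  -- assemble
  rw [integral_congr_ae (Filter.Eventually.of_forall hpt), integral_const_mul,
    integral_add ((hqiU.const_mul _)) ((hgiU.const_mul _)),
    integral_const_mul, integral_const_mul, hA, hB]
  -- the θ-integral and the constant
  set J : ℝ := ∫ t in Ioo (0:ℝ) 1, (t ^ 2 * Real.log t) * (1 - t ^ 2) ^ (((m:ℝ) - 1) / 2)
    with hJ
  have hWθ : Wθ m = 2 * J := by rw [Wθ, w_total m, hJ]
  have hCJ : C = (4 * dr * Real.Gamma ((dr + 2) / 2) /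
      (Real.sqrt Real.pi * Real.Gamma ((dr - 1) / 2))) * J := by
    rw [hC, hJ]
    congr 1
    · rw [hcast, hdr]
    refine setIntegral_congr_fun measurableSet_Ioo fun t _ ↦ ?_
    rw [show ((↑(m + 2) : ℝ) - 3) / 2 = ((m:ℝ) - 1) / 2 by push_cast; ring]
  have hconst := const_identity m
  rw [← hdr] at hconst
  have hπ0 : Real.sqrt Real.pi ≠ 0 := (Real.sqrt_pos.mpr Real.pi_pos).ne'
  have hΓ0 : Real.Gamma ((dr - 1) / 2) ≠ 0 := by
    refine (Real.Gamma_pos_of_pos ?_).ne'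
    rw [hdr]
    have : (0:ℝ) ≤ (m:ℝ) := Nat.cast_nonneg m
    linarith
  have hkey : dr * ((Mr m)⁻¹ * (cball m * Wθ m)) = C / dr := by
    rw [hWθ, hCJ]
    have hMr := Mr_ne m
    field_simp
    rw [div_mul_eq_mul_div, eq_div_iff (mul_ne_zero hπ0 hΓ0)] at hconst
    have hc2 : 2 * dr * cball m * (Real.sqrt Real.pi * Real.Gamma ((dr - 1) / 2))
        = 4 * Real.Gamma ((dr + 2) / 2) * Mr m :=
      mul_left_cancel₀ hdr0 (by linear_combination hconst)
    linear_combination J * hc2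
  rw [hkey]
  field_simp
  ring
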